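/- Let (Q, Σ, μ) be a probability space, U(t) a one-parameter group of measure-preserving *-automorphisms of L^∞(Q,Σ,μ), V a real Σ₀-measurable function with e^{-βV} ∈ L¹. Assume the Klein–Landau bound ‖e^{-∫_a^b U(t)V dt}‖_{L^p} ≤ ‖e^{-(b-a)V}‖_{L^p}. If e^{-βV_-} ∈ L¹(Q,Σ₀,μ) (V_- the negative part of V), then F_{[0,s]} := e^{-∫₀^s U(t)V dt} belongs to L²(Q,Σ,μ) for 0 ≤ s ≤ β/2, with ‖F_{[0,s]}‖₂² ≤ ‖e^{βV_-}‖_{L¹}, and s ↦ F_{[0,s]} is continuous in L²(Q,Σ,μ). -/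

import Mathlib

open MeasureTheory Filter Topology intervalIntegral
open scoped ENNReal NNReal
set_option linter.unusedSectionVars false

private lemma integrableOn_Ioc_shift {f : ℝ → ℝ} {u s : ℝ} (hs : 0 ≤ s) :
    IntegrableOn f (Set.Ioc u (u + s)) volume ↔
      IntegrableOn (fun t => f (t + u)) (Set.Ioc 0 s) volume := by
  rw [← intervalIntegrable_iff_integrableOn_Ioc_of_le (le_add_of_nonneg_right hs),
    ← intervalIntegrable_iff_integrableOn_Ioc_of_le hs]
  constructor
  · intro h
    simpa using h.comp_add_right u
  · intro h
    have := h.comp_add_right (-u)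
    simp only [← sub_eq_add_neg, sub_neg_eq_add, zero_add, sub_add_cancel] at this
    simpa [add_comm] using this

section aux
variable {Q : Type*} [MeasurableSpace Q]

def fknI (V : Q → ℝ) (T : ℝ → Q → Q) (ω : Q) (s : ℝ) : Prop :=
  IntegrableOn (fun t => V (T t ω)) (Set.Ioc 0 s) volume

lemma fknI_anti {V : Q → ℝ} {T : ℝ → Q → Q} (ω : Q) {s s' : ℝ} (h : s ≤ s')
    (h' : fknI V T ω s') : fknI V T ω s :=
  h'.mono_set (Set.Ioc_subset_Ioc_right h)

lemma fknI_shift {V : Q → ℝ} {T : ℝ → Q → Q}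
    (hTgroup : ∀ s t : ℝ, T (s + t) = T s ∘ T t)
    (ω : Q) {u s : ℝ} (hu : 0 ≤ u) (hs : 0 ≤ s) :
    fknI V T ω (u + s) ↔ fknI V T ω u ∧ fknI V T (T u ω) s := by
  have hsplit : Set.Ioc (0:ℝ) (u + s) = Set.Ioc 0 u ∪ Set.Ioc u (u + s) :=
    (Set.Ioc_union_Ioc_eq_Ioc hu (le_add_of_nonneg_right hs)).symm
  have hcongr : (fun t : ℝ => V (T (t + u) ω)) = fun t => V (T t (T u ω)) := by
    funext t; rw [hTgroup t u]; rfl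
  unfold fknI
  rw [hsplit, integrableOn_union, integrableOn_Ioc_shift hs, hcongr]

lemma fknI_measurableSet {V : Q → ℝ} {T : ℝ → Q → Q} (hVmeas : Measurable V)
    (hVT : Measurable (Function.uncurry fun (t : ℝ) (ω : Q) => V (T t ω))) (s : ℝ) :
    MeasurableSet {ω | fknI V T ω s} := by
  have hm : Measurable fun ω => ∫⁻ t in Set.Ioc (0:ℝ) s, (‖V (T t ω)‖₊ : ℝ≥0∞) ∂volume :=
    Measurable.lintegral_prod_right ((hVT.comp measurable_swap).enorm)
  have heq : {ω | fknI V T ω s}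
      = {ω | (∫⁻ t in Set.Ioc (0:ℝ) s, (‖V (T t ω)‖₊ : ℝ≥0∞) ∂volume) < ⊤} := by
    ext ω
    simp only [Set.mem_setOf_eq, fknI, IntegrableOn]
    constructor
    · exact fun h => h.2
    · intro h
      exact ⟨(hVT.comp (measurable_id.prodMk measurable_const)).aestronglyMeasurable, h⟩
  rw [heq]
  exact measurableSet_lt hm measurable_const

def fknC (V : Q → ℝ) (T : ℝ → Q → Q) (r : ℝ) : Set Q :=
  {ω | (∀ s : ℝ, 0 ≤ s → s < r → fknI V T ω s) ∧ ∀ s : ℝ, r < s → ¬ fknI V T ω s}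

lemma fknC_measurableSet {V : Q → ℝ} {T : ℝ → Q → Q} (hVmeas : Measurable V)
    (hVT : Measurable (Function.uncurry fun (t : ℝ) (ω : Q) => V (T t ω))) (r : ℝ) :
    MeasurableSet (fknC V T r) := by
  have heq : fknC V T r = (⋂ q : ℚ, {ω | 0 ≤ (q:ℝ) → (q:ℝ) < r → fknI V T ω q}) ∩
      ⋂ q : ℚ, {ω | r < (q:ℝ) → ¬ fknI V T ω q} := by
    ext ω
    constructor
    · rintro ⟨h1, h2⟩
      exact ⟨Set.mem_iInter.2 fun q hq hq' => h1 q hq hq',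
        Set.mem_iInter.2 fun q hq => h2 q hq⟩
    · rintro ⟨h1, h2⟩
      simp only [Set.mem_iInter, Set.mem_setOf_eq] at h1 h2
      constructor
      · intro s hs hsr
        obtain ⟨q, hq1, hq2⟩ := exists_rat_btwn hsr
        exact fknI_anti ω hq1.le (h1 q (hs.trans hq1.le) hq2)
      · intro s hs hI
        obtain ⟨q, hq1, hq2⟩ := exists_rat_btwn hs
        exact h2 q hq1 (fknI_anti ω hq2.le hI)
  rw [heq]
  refine (MeasurableSet.iInter fun q => ?_).inter (MeasurableSet.iInter fun q => ?_)
  · by_cases h1 : 0 ≤ (q:ℝ)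
    · by_cases h2 : (q:ℝ) < r
      · have : {ω | 0 ≤ (q:ℝ) → (q:ℝ) < r → fknI V T ω q} = {ω | fknI V T ω q} := by
          ext ω; simp [h1, h2]
        rw [this]; exact fknI_measurableSet hVmeas hVT (q:ℝ)
      · have : {ω | 0 ≤ (q:ℝ) → (q:ℝ) < r → fknI V T ω q} = Set.univ := by
          ext ω; simp [h2]
        rw [this]; exact MeasurableSet.univ
    · have : {ω | 0 ≤ (q:ℝ) → (q:ℝ) < r → fknI V T ω q} = Set.univ := by
        ext ω; simp [h1]
      rw [this]; exact MeasurableSet.univ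
  · by_cases h1 : r < (q:ℝ)
    · have : {ω | r < (q:ℝ) → ¬fknI V T ω q} = {ω | fknI V T ω q}ᶜ := by
        ext ω; simp [h1]
      rw [this]; exact (fknI_measurableSet hVmeas hVT (q:ℝ)).compl
    · have : {ω | r < (q:ℝ) → ¬fknI V T ω q} = Set.univ := by
        ext ω; simp [h1]
      rw [this]; exact MeasurableSet.univ

lemma fknC_disjoint {V : Q → ℝ} {T : ℝ → Q → Q} {a b : ℝ} (h0 : 0 ≤ a) (hab : a < b) :
    Disjoint (fknC V T a) (fknC V T b) := by
  rw [Set.disjoint_left]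
  rintro ω ⟨h1, h2⟩ ⟨h1', h2'⟩
  have hs1 : a < (a + b) / 2 := by linarith
  have hs2 : (a + b) / 2 < b := by linarith
  exact h2 _ hs1 (h1' _ (h0.trans hs1.le) hs2)

private lemma null_of_le_disjoint (μ : Measure Q) [IsProbabilityMeasure μ]
    {D : ℕ → Set Q} (hmeas : ∀ n, MeasurableSet (D n))
    (hdisj : Pairwise (Function.onFun Disjoint D))
    {m : ℝ≥0∞} (hm : ∀ n, m ≤ μ (D n)) : m = 0 := by
  by_contra hm0
  have h1 : (∑' _ : ℕ, m) = ⊤ := ENNReal.tsum_const_eq_top_of_ne_zero hm0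
  have h3 : (∑' _ : ℕ, m) ≤ ∑' n, μ (D n) := ENNReal.tsum_le_tsum hm
  rw [h1, ← measure_iUnion hdisj hmeas] at h3
  exact absurd (le_trans h3 prob_le_one) (by simp)

lemma fknC_null (μ : Measure Q) [IsProbabilityMeasure μ]
    {V : Q → ℝ} {T : ℝ → Q → Q} (hVmeas : Measurable V)
    (hTgroup : ∀ s t : ℝ, T (s + t) = T s ∘ T t)
    (hTmp : ∀ t : ℝ, MeasurePreserving (T t) μ μ)
    (hVT : Measurable (Function.uncurry fun (t : ℝ) (ω : Q) => V (T t ω)))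
    {r : ℝ} (hr : 0 < r) : μ (fknC V T r) = 0 := by
  set g : ℕ → ℝ := fun n => r * ((n:ℝ) + 1) / ((n:ℝ) + 2) with hg
  have hgpos : ∀ n : ℕ, 0 < g n := by
    intro n; apply div_pos (by positivity) (by positivity)
  have hglt : ∀ n : ℕ, g n < r := by
    intro n
    rw [hg, div_lt_iff₀ (by positivity)]
    nlinarith [hr]
  have hgmono : StrictMono g := by
    intro a b hab
    rw [hg]
    rw [div_lt_div_iff₀ (by positivity) (by positivity)]
    have : (a:ℝ) < b := by exact_mod_cast hab
    nlinarith [hr]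
  set D : ℕ → Set Q := fun n => fknC V T (g n) with hD
  have hkey : ∀ n : ℕ, μ (fknC V T r) ≤ μ (D n) := by
    intro n
    set u := r - g n with hu
    have hu0 : 0 < u := by simp only [hu, sub_pos]; exact hglt n
    have hsub : fknC V T r ⊆ T u ⁻¹' (D n) := by
      rintro ω ⟨h1, h2⟩
      have hIu : fknI V T ω u := h1 u hu0.le (by have := hgpos n; simp only [hu]; linarith)
      constructor
      · intro s hs hsr
        have hall : fknI V T ω (u + s) := h1 (u + s) (by linarith) (by simp only [hu] at hsr ⊢; linarith)
        exact ((fknI_shift hTgroup ω hu0.le hs).1 hall).2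
      · intro s hs hI
        have h0s : 0 ≤ s := ((hgpos n).trans hs).le
        have hneg := h2 (u + s) (by simp only [hu] at hs ⊢; linarith)
        exact hneg ((fknI_shift hTgroup ω hu0.le h0s).2 ⟨hIu, hI⟩)
    calc μ (fknC V T r) ≤ μ (T u ⁻¹' D n) := measure_mono hsub
      _ = μ (D n) :=
        (hTmp u).measure_preimage (fknC_measurableSet hVmeas hVT (g n)).nullMeasurableSet
  have hdisj : Pairwise (Function.onFun Disjoint D) := by
    intro i j hij
    rcases hij.lt_or_gt with h | h
    · exact fknC_disjoint (hgpos i).le (hgmono h)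
    · exact (fknC_disjoint (hgpos j).le (hgmono h)).symm
  exact null_of_le_disjoint μ (fun n => fknC_measurableSet hVmeas hVT (g n)) hdisj hkey

end aux

theorem fkn_kernel_L2
    {Q : Type*} [MeasurableSpace Q] (μ : Measure Q) [IsProbabilityMeasure μ]
    (β : ℝ) (hβ : 0 < β)
    -- the measure-preserving flow implementing the automorphism group U(t)
    (T : ℝ → Q → Q)
    (hT0 : T 0 = id)
    (hTgroup : ∀ s t : ℝ, T (s + t) = T s ∘ T t)
    (hTmp : ∀ t : ℝ, MeasurePreserving (T t) μ μ)
    -- the interaction V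
    (V : Q → ℝ) (hVmeas : Measurable V)
    (hVT : Measurable (Function.uncurry fun (t : ℝ) (ω : Q) => V (T t ω)))
    (hexp : Integrable (fun ω => Real.exp (-β * V ω)) μ)
    (hexpneg : Integrable (fun ω => Real.exp (β * max (-V ω) 0)) μ)
    -- the Klein–Landau bound ‖e^{-∫_a^b U(t)V dt}‖_p ≤ ‖e^{-(b-a)V}‖_p
    (hKL : ∀ p : ℝ, 1 ≤ p → ∀ a b : ℝ, a ≤ b →
      ∫ ω, Real.exp (-p * ∫ t in a..b, V (T t ω)) ∂μ
        ≤ ∫ ω, Real.exp (-p * ((b - a) * V ω)) ∂μ)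
    -- the FKN kernel
    (F : ℝ → Q → ℝ)
    (hF : ∀ (s : ℝ) (ω : Q), F s ω = Real.exp (-∫ t in (0:ℝ)..s, V (T t ω))) :
    (∀ s ∈ Set.Icc (0:ℝ) (β / 2),
      MemLp (F s) 2 μ ∧
      ∫ ω, (F s ω) ^ 2 ∂μ ≤ ∫ ω, Real.exp (β * max (-V ω) 0) ∂μ) ∧
    (∀ s₀ ∈ Set.Icc (0:ℝ) (β / 2),
      Tendsto (fun s => ∫ ω, (F s ω - F s₀ ω) ^ 2 ∂μ)
        (𝓝[Set.Icc (0:ℝ) (β / 2)] s₀) (𝓝 0)) := by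
  classical
  set c := β / 2 with hcdef
  have hc0 : 0 < c := half_pos hβ
  have hβc : β = 2 * c := by rw [hcdef]; ring
  -- basic measurability
  have hVTmeas' : Measurable fun p : Q × ℝ => V (T p.2 p.1) := hVT.comp measurable_swap
  have hslice : ∀ ω, Measurable fun t => V (T t ω) := fun ω =>
    hVT.comp (measurable_id.prodMk measurable_const)
  have hWslice : ∀ ω, Measurable fun t => max (-V (T t ω)) 0 := fun ω =>
    (hslice ω).neg.max measurable_const
  -- finiteness of lintegral of exp (β W)
  have hexpW_nonneg : ∀ ω, (0:ℝ) ≤ Real.exp (β * max (-V ω) 0) := fun ω => (Real.exp_pos _).le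
  have hKdef : ∫⁻ ω, ENNReal.ofReal (Real.exp (β * max (-V ω) 0)) ∂μ
      = ENNReal.ofReal (∫ ω, Real.exp (β * max (-V ω) 0) ∂μ) :=
    (ofReal_integral_eq_lintegral_ofReal hexpneg (ae_of_all _ hexpW_nonneg)).symm
  have hKlt : (∫⁻ ω, ENNReal.ofReal (Real.exp (β * max (-V ω) 0)) ∂μ) < ⊤ := by
    rw [hKdef]; exact ENNReal.ofReal_lt_top
  have hprodmeas : Measurable fun p : Q × ℝ =>
      ENNReal.ofReal (Real.exp (β * max (-V (T p.2 p.1)) 0)) :=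
    ENNReal.measurable_ofReal.comp
      (Real.measurable_exp.comp (measurable_const.mul (hVTmeas'.neg.max measurable_const)))
  set A := ∫⁻ ω, (∫⁻ t in Set.Ioc (0:ℝ) c, ENNReal.ofReal (Real.exp (β * max (-V (T t ω)) 0))) ∂μ
    with hA
  have hAswap : A = ∫⁻ t in Set.Ioc (0:ℝ) c,
      (∫⁻ ω, ENNReal.ofReal (Real.exp (β * max (-V (T t ω)) 0)) ∂μ) :=
    lintegral_lintegral_swap hprodmeas.aemeasurable
  have hAval : A = (ENNReal.ofReal c) * ∫⁻ ω, ENNReal.ofReal (Real.exp (β * max (-V ω) 0)) ∂μ := by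
    rw [hAswap]
    have hmeasg : Measurable fun ω => ENNReal.ofReal (Real.exp (β * max (-V ω) 0)) :=
      ENNReal.measurable_ofReal.comp
        (Real.measurable_exp.comp (measurable_const.mul (hVmeas.neg.max measurable_const)))
    have h1 : ∀ t : ℝ, ∫⁻ ω, ENNReal.ofReal (Real.exp (β * max (-V (T t ω)) 0)) ∂μ
        = ∫⁻ ω, ENNReal.ofReal (Real.exp (β * max (-V ω) 0)) ∂μ := fun t =>
      (hTmp t).lintegral_comp hmeasg
    rw [lintegral_congr h1, setLIntegral_const, Real.volume_Ioc, sub_zero, mul_comm]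
  have hAlt : A < ⊤ := by
    rw [hAval]
    exact ENNReal.mul_lt_top ENNReal.ofReal_lt_top hKlt
  -- a.e. integrability of exp(β W) and W along orbits
  have hmeasInner : Measurable fun ω =>
      ∫⁻ t in Set.Ioc (0:ℝ) c, ENNReal.ofReal (Real.exp (β * max (-V (T t ω)) 0)) :=
    Measurable.lintegral_prod_right hprodmeas
  have hEae : ∀ᵐ ω ∂μ,
      (∫⁻ t in Set.Ioc (0:ℝ) c, ENNReal.ofReal (Real.exp (β * max (-V (T t ω)) 0))) < ⊤ :=
    ae_lt_top hmeasInner hAlt.ne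
  have hEint : ∀ᵐ ω ∂μ,
      IntegrableOn (fun t => Real.exp (β * max (-V (T t ω)) 0)) (Set.Ioc 0 c) volume := by
    filter_upwards [hEae] with ω hω
    refine ⟨(Real.measurable_exp.comp (measurable_const.mul (hWslice ω))).aestronglyMeasurable, ?_⟩
    rw [hasFiniteIntegral_iff_ofReal (ae_of_all _ fun t => (Real.exp_pos _).le)]
    exact hω
  have hWint : ∀ᵐ ω ∂μ,
      IntegrableOn (fun t => max (-V (T t ω)) 0) (Set.Ioc 0 c) volume := by
    filter_upwards [hEint] with ω hω
    refine Integrable.mono' (hω.const_mul β⁻¹) (hWslice ω).aestronglyMeasurable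
      (ae_of_all _ fun t => ?_)
    rw [Real.norm_eq_abs, abs_of_nonneg (le_max_right _ _)]
    have h1 : β * max (-V (T t ω)) 0 ≤ Real.exp (β * max (-V (T t ω)) 0) := by
      have := Real.add_one_le_exp (β * max (-V (T t ω)) 0)
      linarith
    have h2 := mul_le_mul_of_nonneg_left h1 (inv_nonneg.2 hβ.le)
    rwa [inv_mul_cancel_left₀ hβ.ne'] at h2
  -- the dominating function G
  set G : Q → ℝ := fun ω => Real.exp (∫ t in Set.Ioc (0:ℝ) c, max (-V (T t ω)) 0) with hGdef
  have hGsm : StronglyMeasurable fun ω => ∫ t in Set.Ioc (0:ℝ) c, max (-V (T t ω)) 0 :=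
    StronglyMeasurable.integral_prod_right'
      (f := fun p : Q × ℝ => max (-V (T p.2 p.1)) 0)
      ((hVTmeas'.neg.max measurable_const).stronglyMeasurable)
  have hGmeas : AEStronglyMeasurable G μ :=
    (Real.continuous_exp.comp_stronglyMeasurable hGsm).aestronglyMeasurable
  have hGpos : ∀ ω, 0 < G ω := fun ω => Real.exp_pos _
  have hGge1 : ∀ ω, 1 ≤ G ω := fun ω =>
    Real.one_le_exp (setIntegral_nonneg measurableSet_Ioc fun t _ => le_max_right _ _)
  -- formula for F on [0, ∞)
  have hFIoc : ∀ s : ℝ, 0 ≤ s → ∀ ω,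
      F s ω = Real.exp (-∫ t in Set.Ioc (0:ℝ) s, V (T t ω)) := by
    intro s hs ω
    rw [hF, intervalIntegral.integral_of_le hs]
  have hFpos : ∀ s ω, 0 < F s ω := fun s ω => by rw [hF]; exact Real.exp_pos _
  -- pointwise bound F ≤ G
  have hFleG : ∀ᵐ ω ∂μ, ∀ s ∈ Set.Icc (0:ℝ) c, F s ω ≤ G ω := by
    filter_upwards [hWint] with ω hWω
    intro s hs
    rw [hFIoc s hs.1]
    by_cases hI : IntegrableOn (fun t => V (T t ω)) (Set.Ioc 0 s) volume
    · apply Real.exp_le_exp.2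
      rw [← MeasureTheory.integral_neg]
      have hWs : IntegrableOn (fun t => max (-V (T t ω)) 0) (Set.Ioc 0 s) volume :=
        hWω.mono_set (Set.Ioc_subset_Ioc_right hs.2)
      calc ∫ t in Set.Ioc (0:ℝ) s, -V (T t ω)
          ≤ ∫ t in Set.Ioc (0:ℝ) s, max (-V (T t ω)) 0 :=
            integral_mono hI.neg hWs fun t => le_max_left _ _
        _ ≤ ∫ t in Set.Ioc (0:ℝ) c, max (-V (T t ω)) 0 :=
            setIntegral_mono_set hWω (ae_of_all _ fun t => le_max_right _ _)
              (HasSubset.Subset.eventuallyLE (Set.Ioc_subset_Ioc_right hs.2))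
    · rw [integral_undef hI, neg_zero, Real.exp_zero]
      exact hGge1 ω
  -- Jensen: square of G has finite lintegral
  have hν : (volume.restrict (Set.Ioc (0:ℝ) c)) Set.univ = ENNReal.ofReal c := by
    rw [Measure.restrict_apply_univ, Real.volume_Ioc, sub_zero]
  have hG2lint : ∫⁻ ω, ENNReal.ofReal (G ω ^ 2) ∂μ < ⊤ := by
    haveI hfin : IsFiniteMeasure (volume.restrict (Set.Ioc (0:ℝ) c)) :=
      ⟨by rw [hν]; exact ENNReal.ofReal_lt_top⟩
    haveI hnz : NeZero (volume.restrict (Set.Ioc (0:ℝ) c)) := by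
      refine ⟨fun h => ?_⟩
      rw [h] at hν
      simp only [Measure.coe_zero, Pi.zero_apply] at hν
      exact absurd hν.symm (ne_of_gt (ENNReal.ofReal_pos.2 hc0))
    have hpt : ∀ᵐ ω ∂μ, ENNReal.ofReal (G ω ^ 2) ≤ ENNReal.ofReal c⁻¹ *
        ∫⁻ t in Set.Ioc (0:ℝ) c, ENNReal.ofReal (Real.exp (β * max (-V (T t ω)) 0)) := by
      filter_upwards [hWint, hEint] with ω hW hE
      have hjensen := convexOn_exp.map_average_le Real.continuous_exp.continuousOn
        isClosed_univ (ae_of_all _ fun t : ℝ => Set.mem_univ _)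
        (μ := volume.restrict (Set.Ioc (0:ℝ) c))
        (f := fun t => β * max (-V (T t ω)) 0)
        (hW.const_mul β) hE
      rw [average_eq, average_eq, measureReal_def, hν, ENNReal.toReal_ofReal hc0.le, smul_eq_mul,
        smul_eq_mul] at hjensen
      have hGsq : G ω ^ 2
          = Real.exp (c⁻¹ * ∫ t in Set.Ioc (0:ℝ) c, β * max (-V (T t ω)) 0) := by
        rw [MeasureTheory.integral_const_mul, hGdef]
        simp only []
        rw [sq, ← Real.exp_add, hβc]
        congr 1
        field_simp
        ring
      rw [hGsq]
      calc ENNReal.ofReal (Real.exp (c⁻¹ * ∫ t in Set.Ioc (0:ℝ) c, β * max (-V (T t ω)) 0))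
          ≤ ENNReal.ofReal (c⁻¹ * ∫ t in Set.Ioc (0:ℝ) c, Real.exp (β * max (-V (T t ω)) 0)) :=
            ENNReal.ofReal_le_ofReal hjensen
        _ = ENNReal.ofReal c⁻¹ *
            ENNReal.ofReal (∫ t in Set.Ioc (0:ℝ) c, Real.exp (β * max (-V (T t ω)) 0)) :=
            ENNReal.ofReal_mul (inv_nonneg.2 hc0.le)
        _ ≤ ENNReal.ofReal c⁻¹ *
            ∫⁻ t in Set.Ioc (0:ℝ) c, ENNReal.ofReal (Real.exp (β * max (-V (T t ω)) 0)) := by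
            rw [ofReal_integral_eq_lintegral_ofReal hE (ae_of_all _ fun t => (Real.exp_pos _).le)]
    calc ∫⁻ ω, ENNReal.ofReal (G ω ^ 2) ∂μ
        ≤ ∫⁻ ω, ENNReal.ofReal c⁻¹ *
            (∫⁻ t in Set.Ioc (0:ℝ) c, ENNReal.ofReal (Real.exp (β * max (-V (T t ω)) 0))) ∂μ :=
          lintegral_mono_ae hpt
      _ = ENNReal.ofReal c⁻¹ * A := lintegral_const_mul' _ _ ENNReal.ofReal_ne_top
      _ < ⊤ := ENNReal.mul_lt_top ENNReal.ofReal_lt_top hAlt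
  have hG2int : Integrable (fun ω => G ω ^ 2) μ :=
    ⟨(continuous_pow 2).comp_aestronglyMeasurable hGmeas,
      (hasFiniteIntegral_iff_ofReal (ae_of_all _ fun ω => sq_nonneg _)).2 hG2lint⟩
  have hGmem : MemLp G 2 μ := (memLp_two_iff_integrable_sq hGmeas).2 hG2int
  -- measurability of F s for s ≥ 0
  have hFaesm : ∀ s : ℝ, 0 ≤ s → AEStronglyMeasurable (F s) μ := by
    intro s hs
    have heq : F s = fun ω => Real.exp (-∫ t in Set.Ioc (0:ℝ) s, V (T t ω)) :=
      funext fun ω => hFIoc s hs ω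
    rw [heq]
    exact ((Real.continuous_exp.comp continuous_neg).comp_stronglyMeasurable
      (StronglyMeasurable.integral_prod_right'
        (f := fun p : Q × ℝ => V (T p.2 p.1)) hVTmeas'.stronglyMeasurable)).aestronglyMeasurable
  -- Part 1
  have part1 : ∀ s ∈ Set.Icc (0:ℝ) c, MemLp (F s) 2 μ ∧
      ∫ ω, F s ω ^ 2 ∂μ ≤ ∫ ω, Real.exp (β * max (-V ω) 0) ∂μ := by
    intro s hs
    constructor
    · refine hGmem.of_le (hFaesm s hs.1) ?_
      filter_upwards [hFleG] with ω hω
      rw [Real.norm_eq_abs, Real.norm_eq_abs, abs_of_pos (hFpos s ω), abs_of_pos (hGpos ω)]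
      exact hω s hs
    · have h1 : ∫ ω, F s ω ^ 2 ∂μ
          = ∫ ω, Real.exp (-(2:ℝ) * ∫ t in (0:ℝ)..s, V (T t ω)) ∂μ := by
        congr 1
        funext ω
        rw [hF, show (-(2:ℝ) * ∫ t in (0:ℝ)..s, V (T t ω))
          = (-∫ t in (0:ℝ)..s, V (T t ω)) + (-∫ t in (0:ℝ)..s, V (T t ω)) by ring,
          Real.exp_add, sq]
      rw [h1]
      refine (hKL 2 one_le_two 0 s hs.1).trans ?_
      have hptw : ∀ ω, Real.exp (-(2:ℝ) * ((s - 0) * V ω)) ≤ Real.exp (β * max (-V ω) 0) := by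
        intro ω
        apply Real.exp_le_exp.2
        rw [sub_zero]
        rcases le_or_gt 0 (V ω) with h | h
        · have h2 : -(2:ℝ) * (s * V ω) ≤ 0 := by nlinarith [hs.1]
          exact h2.trans (mul_nonneg hβ.le (le_max_right _ _))
        · have hmax : max (-V ω) 0 = -V ω := max_eq_left (by linarith)
          rw [hmax]
          have hsc : s ≤ c := hs.2
          nlinarith [hs.1]
      have hint : Integrable (fun ω => Real.exp (-(2:ℝ) * ((s - 0) * V ω))) μ := by
        refine hexpneg.mono'
          (Real.measurable_exp.comp
            (measurable_const.mul (measurable_const.mul hVmeas))).aestronglyMeasurable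
          (ae_of_all _ fun ω => ?_)
        rw [Real.norm_eq_abs, abs_of_pos (Real.exp_pos _)]
        exact hptw ω
      exact integral_mono hint hexpneg hptw
  refine ⟨part1, ?_⟩
  -- Part 2 : L² continuity
  intro s₀ hs₀
  have hnull : ∀ᵐ ω ∂μ, s₀ = 0 ∨ ω ∉ fknC V T s₀ := by
    rcases eq_or_lt_of_le hs₀.1 with h0 | h0
    · exact ae_of_all _ fun ω => Or.inl h0.symm
    · have hz := fknC_null μ hVmeas hTgroup hTmp hVT h0
      have : ∀ᵐ ω ∂μ, ω ∉ fknC V T s₀ := by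
        rw [ae_iff]
        simpa using hz
      filter_upwards [this] with ω hω using Or.inr hω
  have hlim : ∀ᵐ ω ∂μ, Tendsto (fun s => F s ω) (𝓝[Set.Icc (0:ℝ) c] s₀) (𝓝 (F s₀ ω)) := by
    filter_upwards [hnull] with ω hω
    by_cases hA : ∃ s₂, s₀ < s₂ ∧ fknI V T ω s₂
    · obtain ⟨s₂, hs₂, hI₂⟩ := hA
      have hIcc : IntegrableOn (fun t => V (T t ω)) (Set.Icc 0 s₂) volume :=
        (integrableOn_Icc_iff_integrableOn_Ioc (by simp)).2 hI₂
      have hcont := intervalIntegral.continuousOn_primitive hIcc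
      have hs₀mem : s₀ ∈ Set.Icc (0:ℝ) s₂ := ⟨hs₀.1, hs₂.le⟩
      have hcwa : ContinuousWithinAt (fun x => ∫ t in Set.Ioc (0:ℝ) x, V (T t ω) ∂volume)
          (Set.Icc 0 s₂) s₀ := hcont s₀ hs₀mem
      have hle : 𝓝[Set.Icc (0:ℝ) c] s₀ ≤ 𝓝[Set.Icc (0:ℝ) s₂] s₀ := by
        apply nhdsWithin_le_iff.2
        have h1 : Set.Iic s₂ ∈ 𝓝 s₀ := Iic_mem_nhds hs₂
        refine mem_of_superset
          (Filter.inter_mem (mem_nhdsWithin_of_mem_nhds h1) self_mem_nhdsWithin) ?_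
        rintro x ⟨hx1, hx2⟩
        exact ⟨hx2.1, hx1⟩
      have htend : Tendsto (fun s => Real.exp (-∫ t in Set.Ioc (0:ℝ) s, V (T t ω)))
          (𝓝[Set.Icc (0:ℝ) c] s₀)
          (𝓝 (Real.exp (-∫ t in Set.Ioc (0:ℝ) s₀, V (T t ω)))) :=
        ((Real.continuous_exp.comp continuous_neg).tendsto _).comp (hcwa.mono_left hle)
      have heq : (fun s => Real.exp (-∫ t in Set.Ioc (0:ℝ) s, V (T t ω)))
          =ᶠ[𝓝[Set.Icc (0:ℝ) c] s₀] fun s => F s ω := by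
        filter_upwards [self_mem_nhdsWithin] with s hs using (hFIoc s hs.1 ω).symm
      have h2 := htend.congr' heq
      rwa [← hFIoc s₀ hs₀.1 ω] at h2
    · push_neg at hA
      by_cases hB : ∃ s₁, 0 ≤ s₁ ∧ s₁ < s₀ ∧ ¬ fknI V T ω s₁
      · obtain ⟨s₁, hs₁0, hs₁, hnI⟩ := hB
        have hconst : ∀ᶠ s in 𝓝[Set.Icc (0:ℝ) c] s₀, F s ω = 1 := by
          have h1 : ∀ᶠ s in 𝓝[Set.Icc (0:ℝ) c] s₀, s₁ < s :=
            mem_nhdsWithin_of_mem_nhds (Ioi_mem_nhds hs₁)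
          filter_upwards [h1, self_mem_nhdsWithin] with s h2 h3
          have hnint : ¬ fknI V T ω s := fun h => hnI (fknI_anti ω h2.le h)
          rw [hFIoc s h3.1, integral_undef hnint, neg_zero, Real.exp_zero]
        have hval : F s₀ ω = 1 := by
          have hnint : ¬ fknI V T ω s₀ := fun h => hnI (fknI_anti ω hs₁.le h)
          rw [hFIoc s₀ hs₀.1, integral_undef hnint, neg_zero, Real.exp_zero]
        rw [hval]
        exact Tendsto.congr' (hconst.mono fun s h => h.symm) tendsto_const_nhds
      · push_neg at hB
        have hmem : ω ∈ fknC V T s₀ := ⟨fun s hs hsr => hB s hs hsr, fun s hs => hA s hs⟩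
        rcases hω with h0 | hnotin
        · subst h0
          have hconst : ∀ s ∈ Set.Icc (0:ℝ) c, F s ω = 1 := by
            intro s hs
            rcases eq_or_lt_of_le hs.1 with h | h
            · rw [hFIoc s hs.1, ← h]
              simp
            · rw [hFIoc s hs.1, integral_undef (hA s h), neg_zero, Real.exp_zero]
          have hval : F 0 ω = 1 := by
            rw [hF]
            simp
          rw [hval]
          refine Tendsto.congr' ?_ tendsto_const_nhds
          filter_upwards [self_mem_nhdsWithin] with s hs using (hconst s hs).symm
        · exact absurd hmem hnotin
  -- dominated convergence
  have hDCT := MeasureTheory.tendsto_integral_filter_of_dominated_convergence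
    (μ := μ) (l := 𝓝[Set.Icc (0:ℝ) c] s₀)
    (F := fun s ω => (F s ω - F s₀ ω) ^ 2) (f := fun _ => (0:ℝ))
    (bound := fun ω => 4 * G ω ^ 2)
    (by
      filter_upwards [self_mem_nhdsWithin] with s hs
      exact (continuous_pow 2).comp_aestronglyMeasurable
        ((hFaesm s hs.1).sub (hFaesm s₀ hs₀.1)))
    (by
      filter_upwards [self_mem_nhdsWithin] with s hs
      filter_upwards [hFleG] with ω hω
      have h1 : 0 < F s ω := hFpos s ω
      have h2 : 0 < F s₀ ω := hFpos s₀ ω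
      have h3 : F s ω ≤ G ω := hω s hs
      have h4 : F s₀ ω ≤ G ω := hω s₀ hs₀
      rw [Real.norm_eq_abs, abs_of_nonneg (sq_nonneg _)]
      nlinarith)
    (hG2int.const_mul 4)
    (by
      filter_upwards [hlim] with ω hω
      have := (hω.sub (tendsto_const_nhds (x := F s₀ ω))).pow 2
      simpa using this)
  simpa using hDCT
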